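/- If f is holomorphic of weight k with Fourier expansion f(z) = ∑_{n≥1} a_f(n) e(nz) satisfying f|_k γ = χ(γ) f for all γ ∈ Γ₀(N), and σ⁻¹ = [[d,-b],[-q,a]] ∈ SL₂(ℤ), then (f|_k σ⁻¹)(z + δ) = (f|_k σ⁻¹)(z) where δ = [Mq, q², N]/q² and M is the conductor of χ. -/
import Mathlib


open Complex

/-- The weight `k` slash operator on functions `ℂ → ℂ`, for integer matrices of
determinant one: `(f|_k g)(z) = (cz+d)^{-k} f((az+b)/(cz+d))`. -/
noncomputable def slash (k : ℤ) (g : Matrix (Fin 2) (Fin 2) ℤ) (f : ℂ → ℂ) : ℂ → ℂ :=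
  fun z => ((g 1 0 : ℂ) * z + (g 1 1 : ℂ)) ^ (-k) *
    f (((g 0 0 : ℂ) * z + (g 0 1 : ℂ)) / ((g 1 0 : ℂ) * z + (g 1 1 : ℂ)))

/-- If `f` is a holomorphic modular form of weight `k`, level `N` and nebentypus `χ`
of conductor `M ∣ N`, and `σ⁻¹ = [[d,-b],[-q,a]] ∈ SL₂(ℤ)` with `q ∣ N`, then
`(f|_k σ⁻¹)(z + δ) = (f|_k σ⁻¹)(z)` where `δ = [Mq, q², N]/q²` is the extended width. -/
theorem slash_periodic (N M : ℕ) (k : ℤ) (hM : 0 < M) (hMN : M ∣ N)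
    (χ : DirichletCharacter ℂ M) (f : ℂ → ℂ)
    (hmod : ∀ g : Matrix (Fin 2) (Fin 2) ℤ, g.det = 1 → (N : ℤ) ∣ g 1 0 →
      slash k g f = fun z => χ ((g 1 1 : ℤ) : ZMod M) * f z)
    (a b d : ℤ) (q : ℕ) (hq : 0 < q) (hqN : q ∣ N)
    (hdet : d * a - b * (q : ℤ) = 1) :
    ∀ z : ℂ,
      slash k !![d, -b; -(q : ℤ), a] f
          (z + ((Nat.lcm (M * q) (Nat.lcm (q ^ 2) N) / q ^ 2 : ℕ) : ℂ))
        = slash k !![d, -b; -(q : ℤ), a] f z := by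
  intro z
  set δ : ℕ := Nat.lcm (M * q) (Nat.lcm (q ^ 2) N) / q ^ 2 with hδdef
  rcases eq_or_ne N 0 with rfl | hN
  · have : δ = 0 := by simp [hδdef]
    rw [this]
    norm_num
  haveI : NeZero M := ⟨hM.ne'⟩
  have hq2L : q ^ 2 ∣ Nat.lcm (M * q) (Nat.lcm (q ^ 2) N) :=
    (Nat.dvd_lcm_left _ _).trans (Nat.dvd_lcm_right _ _)
  have hLδ : q ^ 2 * δ = Nat.lcm (M * q) (Nat.lcm (q ^ 2) N) := by
    rw [hδdef, Nat.mul_div_cancel' hq2L]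
  have hNqδ : N ∣ q ^ 2 * δ := by
    rw [hLδ]; exact (Nat.dvd_lcm_right _ _).trans (Nat.dvd_lcm_right _ _)
  have hMqδ : M ∣ q * δ := by
    have h1 : q * M ∣ q * (q * δ) := by
      rw [show q * (q * δ) = q ^ 2 * δ by ring, hLδ, mul_comm q M]
      exact Nat.dvd_lcm_left _ _
    exact (mul_dvd_mul_iff_left hq.ne').mp h1
  have hδpos : 0 < δ := by
    have hL : 0 < Nat.lcm (M * q) (Nat.lcm (q ^ 2) N) :=
      Nat.lcm_pos (by positivity) (Nat.lcm_pos (by positivity) hN.bot_lt)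
    rw [← hLδ] at hL
    exact Nat.pos_of_ne_zero (by intro h; rw [h, mul_zero] at hL; exact absurd hL (lt_irrefl 0))
  have hQ : (q : ℂ) ≠ 0 := Nat.cast_ne_zero.mpr hq.ne'
  have hD : ((δ : ℕ) : ℂ) ≠ 0 := Nat.cast_ne_zero.mpr hδpos.ne'
  have hdetC : (d : ℂ) * a - b * q = 1 := by exact_mod_cast hdet
  have hqδ0 : ((q * δ : ℕ) : ZMod M) = 0 := (ZMod.natCast_eq_zero_iff _ _).mpr hMqδ
  have hχm : χ (((1 - d * q * δ : ℤ) : ZMod M)) = 1 := by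
    have h1 : ((1 - d * q * δ : ℤ) : ZMod M) = 1 := by
      push_cast
      push_cast at hqδ0
      rw [mul_assoc, hqδ0, mul_zero, sub_zero]
    rw [h1, map_one]
  have hχp : χ (((1 + d * q * δ : ℤ) : ZMod M)) = 1 := by
    have h1 : ((1 + d * q * δ : ℤ) : ZMod M) = 1 := by
      push_cast
      push_cast at hqδ0
      rw [mul_assoc, hqδ0, mul_zero, add_zero]
    rw [h1, map_one]
  have hNdvd : (N : ℤ) ∣ (q : ℤ) ^ 2 * δ := by exact_mod_cast Int.natCast_dvd_natCast.mpr hNqδ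
  have hγ := hmod !![1 + d * q * δ, d ^ 2 * δ; -((q : ℤ) ^ 2 * δ), 1 - d * q * δ]
    (by rw [Matrix.det_fin_two_of]; ring)
    (by
      simp only [Matrix.of_apply, Matrix.cons_val', Matrix.cons_val_zero, Matrix.empty_val',
        Matrix.cons_val_fin_one, Matrix.cons_val_one, Matrix.head_cons, Matrix.head_fin_const]
      exact dvd_neg.mpr hNdvd)
  have hγ' := hmod !![1 - d * q * δ, -(d ^ 2 * δ); (q : ℤ) ^ 2 * δ, 1 + d * q * δ]
    (by rw [Matrix.det_fin_two_of]; ring)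
    (by
      simp only [Matrix.of_apply, Matrix.cons_val', Matrix.cons_val_zero, Matrix.empty_val',
        Matrix.cons_val_fin_one, Matrix.cons_val_one, Matrix.head_cons, Matrix.head_fin_const]
      exact hNdvd)
  simp only [slash, Matrix.cons_val', Matrix.cons_val_zero, Matrix.empty_val',
    Matrix.cons_val_fin_one, Matrix.cons_val_one, Matrix.head_cons, Matrix.head_fin_const, Matrix.of_apply] at hγ hγ' ⊢
  simp only [hχm, one_mul] at hγ
  simp only [hχp, one_mul] at hγ'
  push_cast
  rcases eq_or_ne (-(q:ℂ) * z + (a:ℂ)) 0 with hc1 | hc1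
  · have hc2 : -(q:ℂ) * (z + (δ:ℕ)) + a = -((q:ℂ) * (δ:ℕ)) := by linear_combination hc1
    set A₂ : ℂ := ((d:ℂ) * (z + (δ:ℕ)) + -(b:ℂ)) / (-(q:ℂ) * (z + (δ:ℕ)) + (a:ℂ)) with hA2
    have hz : (q:ℂ) * z = a := by linear_combination -hc1
    have hA2v : A₂ = -(1 + (d:ℂ) * q * δ) / ((q:ℂ) ^ 2 * δ) := by
      rw [hA2, hc2, div_eq_div_iff (neg_ne_zero.mpr (mul_ne_zero hQ hD))
        (mul_ne_zero (pow_ne_zero 2 hQ) hD)]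
      linear_combination ((q:ℂ)*((δ:ℕ):ℂ))*hdetC + ((q:ℂ)*((δ:ℕ):ℂ)*(d:ℂ))*hz
    have h2 := congrFun hγ' A₂
    simp only [slash, Matrix.cons_val', Matrix.cons_val_zero, Matrix.empty_val',
      Matrix.cons_val_fin_one, Matrix.cons_val_one, Matrix.head_cons, Matrix.head_fin_const,
      Matrix.of_apply] at h2
    push_cast at h2
    have hzero : (q:ℂ) ^ 2 * ((δ:ℕ):ℂ) * A₂ + (1 + (d:ℂ) * q * δ) = 0 := by
      rw [hA2v]
      field_simp
      ring
    rw [hzero, div_zero] at h2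
    rw [hc1, hc2, div_zero, ← h2]
    rcases eq_or_ne k 0 with rfl | hk
    · simp
    · rw [zero_zpow _ (neg_ne_zero.mpr hk)]
      ring
  rcases eq_or_ne (-(q:ℂ) * (z + (δ:ℕ)) + (a:ℂ)) 0 with hc2 | hc2
  · have hz : (q:ℂ) * (z + (δ:ℕ)) = a := by linear_combination -hc2
    have hc1v : -(q:ℂ) * z + a = (q:ℂ) * (δ:ℕ) := by linear_combination hc2
    set A₁ : ℂ := ((d:ℂ) * z + -(b:ℂ)) / (-(q:ℂ) * z + (a:ℂ)) with hA1
    have hA1v : A₁ = (1 - (d:ℂ) * q * δ) / ((q:ℂ) ^ 2 * δ) := by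
      rw [hA1, hc1v, div_eq_div_iff (mul_ne_zero hQ hD) (mul_ne_zero (pow_ne_zero 2 hQ) hD)]
      linear_combination ((q:ℂ)*((δ:ℕ):ℂ))*hdetC + ((q:ℂ)*((δ:ℕ):ℂ)*(d:ℂ))*hz
    have h1 := congrFun hγ A₁
    simp only [slash, Matrix.cons_val', Matrix.cons_val_zero, Matrix.empty_val',
      Matrix.cons_val_fin_one, Matrix.cons_val_one, Matrix.head_cons, Matrix.head_fin_const,
      Matrix.of_apply] at h1
    push_cast at h1
    have hzero : -((q:ℂ) ^ 2 * ((δ:ℕ):ℂ)) * A₁ + (1 - (d:ℂ) * q * δ) = 0 := by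
      rw [hA1v]
      field_simp
      ring
    rw [hzero, div_zero] at h1
    rw [hc2, div_zero, hc1v, ← h1]
    rcases eq_or_ne k 0 with rfl | hk
    · simp
    · rw [zero_zpow _ (neg_ne_zero.mpr hk)]
      ring
  set A₁ : ℂ := ((d:ℂ) * z + -(b:ℂ)) / (-(q:ℂ) * z + (a:ℂ)) with hA1
  have h1 := congrFun hγ A₁
  simp only [slash, Matrix.cons_val', Matrix.cons_val_zero, Matrix.empty_val',
    Matrix.cons_val_fin_one, Matrix.cons_val_one, Matrix.head_cons, Matrix.head_fin_const,
    Matrix.of_apply] at h1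
  push_cast at h1
  have hc1n : -((q:ℂ) * z) + a ≠ 0 := by rw [← neg_mul]; exact hc1
  have hJ : -((q:ℂ) ^ 2 * (δ:ℕ)) * A₁ + (1 - (d:ℂ) * q * δ)
      = (-(q:ℂ) * (z + (δ:ℕ)) + a) / (-(q:ℂ) * z + a) := by
    rw [hA1]; field_simp [hc1, hc1n]; linear_combination (-(q:ℂ)*((δ:ℕ):ℂ)) * hdetC
  have hNum : (1 + (d:ℂ) * q * δ) * A₁ + (d:ℂ) ^ 2 * δ
      = ((d:ℂ) * (z + (δ:ℕ)) + -b) / (-(q:ℂ) * z + a) := by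
    rw [hA1]; field_simp [hc1, hc1n]; linear_combination ((d:ℂ)*((δ:ℕ):ℂ)) * hdetC
  rw [hJ, hNum, div_div_div_comm, div_self hc1, div_one] at h1
  rw [← h1, ← mul_assoc]
  congr 1
  rw [← mul_zpow, mul_comm (-(q:ℂ) * z + a), div_mul_cancel₀ _ hc1]
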